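/- Let (Ω, F, P) be a probability space, let K, N ∈ ℕ, let σ² > 0, fix a user index u ∈ {1,…,N}, and let h₁,…,h_N : Ω → ℂ^K and v_u : Ω → ℂ^K be random vectors. Define the instantaneous SINR s_u : ℝ₊₊^N × Ω → ℝ₊ by s_u(p, ω) = p_u |h_u(ω)^H v_u(ω)|² / (∑_{k ≠ u} p_k |h_k(ω)^H v_u(ω)|² + σ²). Suppose that for almost every ω ∈ Ω one has |h_u(ω)^H v_u(ω)| ≠ 0. Then for almost every ω ∈ Ω, the function p ↦ p_u / log(1 + s_u(p, ω)) is an MSP function on ℝ₊₊^N. -/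

import Mathlib

open MeasureTheory Filter

/-- The open positive cone in `ℝ^N`. -/
def PosCone (N : ℕ) : Set (Fin N → ℝ) := {x | ∀ i, 0 < x i}

/-- A monotonic, scalable, and positive (MSP) function on the positive cone `ℝ₊₊^N`:
(0) it is positive on the cone, (i) monotone on the cone, (ii) scalable, and
(iii) its infimum over the cone is positive. -/
def IsMSPFun {N : ℕ} (f : (Fin N → ℝ) → ℝ) : Prop :=
  (∀ x : Fin N → ℝ, (∀ i, 0 < x i) → 0 < f x) ∧
  (∀ x y : Fin N → ℝ, (∀ i, 0 < x i) → (∀ i, 0 < y i) → x ≤ y → f x ≤ f y) ∧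
  (∀ α : ℝ, 1 < α → ∀ x : Fin N → ℝ, (∀ i, 0 < x i) → f (α • x) < α * f x) ∧
  0 < sInf (f '' PosCone N)

/-- An MSP mapping: every coordinate function is an MSP function. -/
def IsMSPMap {N : ℕ} (T : (Fin N → ℝ) → (Fin N → ℝ)) : Prop :=
  ∀ i, IsMSPFun (fun x => T x i)

/-- A monotone norm on `ℝ^N`: a genuine norm that is order-preserving on the
nonnegative cone. -/
def IsMonoNorm {N : ℕ} (nrm : (Fin N → ℝ) → ℝ) : Prop :=
  (∀ x : Fin N → ℝ, nrm x = 0 ↔ x = 0) ∧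
  (∀ (a : ℝ) (x : Fin N → ℝ), nrm (a • x) = |a| * nrm x) ∧
  (∀ x y : Fin N → ℝ, nrm (x + y) ≤ nrm x + nrm y) ∧
  (∀ x y : Fin N → ℝ, (∀ i, 0 ≤ x i) → (∀ i, 0 ≤ y i) → x ≤ y → nrm x ≤ nrm y)

/-- `chGain a b = |aᴴ b|`, the modulus of the inner product between the aggregated
channel `a` and the beamformer `b` (conjugate-transpose convention). -/
noncomputable def chGain {K : ℕ} (a b : Fin K → ℂ) : ℝ :=
  ‖∑ i, (starRingEnd ℂ) (a i) * b i‖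

/-- The instantaneous SINR of user `u` at power vector `p` and sample `ω`. -/
noncomputable def instSINR {K N : ℕ} {Ω : Type*}
    (hch : Fin N → Ω → (Fin K → ℂ)) (v : Ω → (Fin K → ℂ)) (σsq : ℝ) (u : Fin N)
    (p : Fin N → ℝ) (ω : Ω) : ℝ :=
  p u * chGain (hch u ω) (v ω) ^ 2 /
    (∑ k ∈ Finset.univ.erase u, p k * chGain (hch k ω) (v ω) ^ 2 + σsq)

lemma mono_aux {c a b : ℝ} (hc : 0 < c) (ha : 0 < a) (hab : a ≤ b) :
    a / Real.log (1 + a * c) ≤ b / Real.log (1 + b * c) := by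
  have hb : 0 < b := ha.trans_le hab
  have hac : 0 < a * c := mul_pos ha hc
  have hbc : 0 < b * c := mul_pos hb hc
  have hla : 0 < Real.log (1 + a * c) := Real.log_pos (by linarith)
  have hlb : 0 < Real.log (1 + b * c) := Real.log_pos (by linarith)
  rw [div_le_div_iff₀ hla hlb]
  have hber : 1 + b * c ≤ (1 + a * c) ^ (b / a) := by
    have h1 : (1 : ℝ) ≤ b / a := (one_le_div ha).2 hab
    have := one_add_mul_self_le_rpow_one_add (s := a * c) (by linarith) h1
    calc 1 + b * c = 1 + b / a * (a * c) := by field_simp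
    _ ≤ (1 + a * c) ^ (b / a) := this
  have hlog : Real.log (1 + b * c) ≤ (b / a) * Real.log (1 + a * c) := by
    calc Real.log (1 + b * c) ≤ Real.log ((1 + a * c) ^ (b / a)) :=
      Real.log_le_log (by linarith) hber
    _ = (b / a) * Real.log (1 + a * c) := Real.log_rpow (by linarith) _
  calc a * Real.log (1 + b * c) ≤ a * ((b / a) * Real.log (1 + a * c)) := by
        exact mul_le_mul_of_nonneg_left hlog ha.le
  _ = b * Real.log (1 + a * c) := by field_simp

lemma msp_aux {N : ℕ} (u : Fin N) (g : ℝ) (hg : 0 < g) (w : Fin N → ℝ)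
    (hw : ∀ k, 0 ≤ w k) {σsq : ℝ} (hσ : 0 < σsq) :
    IsMSPFun (fun p : Fin N → ℝ => p u / Real.log (1 + p u * g /
      (∑ k ∈ Finset.univ.erase u, p k * w k + σsq))) := by
  set S : (Fin N → ℝ) → ℝ := fun p => ∑ k ∈ Finset.univ.erase u, p k * w k with hS
  have hSnn : ∀ p : Fin N → ℝ, (∀ i, 0 < p i) → 0 ≤ S p := fun p hp =>
    Finset.sum_nonneg fun k _ => mul_nonneg (hp k).le (hw k)
  have hDpos : ∀ p : Fin N → ℝ, (∀ i, 0 < p i) → 0 < S p + σsq := fun p hp => by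
    have := hSnn p hp; linarith
  have hspos : ∀ p : Fin N → ℝ, (∀ i, 0 < p i) →
      0 < p u * g / (S p + σsq) := fun p hp =>
    div_pos (mul_pos (hp u) hg) (hDpos p hp)
  have hlogpos : ∀ p : Fin N → ℝ, (∀ i, 0 < p i) →
      0 < Real.log (1 + p u * g / (S p + σsq)) := fun p hp =>
    Real.log_pos (by have := hspos p hp; linarith)
  refine ⟨fun x hx => div_pos (hx u) (hlogpos x hx), ?_, ?_, ?_⟩
  · -- monotone
    intro x y hx hy hxy
    have hDxy : S x + σsq ≤ S y + σsq := by
      have : S x ≤ S y := Finset.sum_le_sum fun k _ =>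
        mul_le_mul_of_nonneg_right (hxy k) (hw k)
      linarith
    have h1 : x u / Real.log (1 + x u * (g / (S x + σsq))) ≤
        y u / Real.log (1 + y u * (g / (S x + σsq))) :=
      mono_aux (div_pos hg (hDpos x hx)) (hx u) (hxy u)
    have h2 : y u * g / (S y + σsq) ≤ y u * (g / (S x + σsq)) := by
      rw [← mul_div_assoc]
      exact div_le_div_of_nonneg_left (mul_pos (hy u) hg).le (hDpos x hx) hDxy
    have h3 : y u / Real.log (1 + y u * (g / (S x + σsq))) ≤
        y u / Real.log (1 + y u * g / (S y + σsq)) := by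
      apply div_le_div_of_nonneg_left (hy u).le (hlogpos y hy)
      exact Real.log_le_log (by have := hspos y hy; linarith) (by linarith)
    calc x u / Real.log (1 + x u * g / (S x + σsq))
        = x u / Real.log (1 + x u * (g / (S x + σsq))) := by rw [mul_div_assoc]
      _ ≤ y u / Real.log (1 + y u * (g / (S x + σsq))) := h1
      _ ≤ y u / Real.log (1 + y u * g / (S y + σsq)) := h3
  · -- scalable
    intro α hα x hx
    have hαpos : (0 : ℝ) < α := by linarith
    have hxα : ∀ i, 0 < (α • x) i := fun i => by
      simpa using mul_pos hαpos (hx i)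
    have hSsmul : S (α • x) = α * S x := by
      simp only [hS, Pi.smul_apply, smul_eq_mul, Finset.mul_sum, mul_assoc]
    have hkey : x u * g / (S x + σsq) < (α • x) u * g / (S (α • x) + σsq) := by
      rw [hSsmul, Pi.smul_apply, smul_eq_mul,
        div_lt_div_iff₀ (hDpos x hx) (by have := hSnn x hx; positivity)]
      have hxu := hx u
      have hSx := hSnn x hx
      nlinarith [mul_pos (mul_pos hxu hg) hσ]
    have hlt : Real.log (1 + x u * g / (S x + σsq)) <
        Real.log (1 + (α • x) u * g / (S (α • x) + σsq)) :=
      Real.log_lt_log (by have := hspos x hx; linarith) (by linarith)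
    calc (α • x) u / Real.log (1 + (α • x) u * g / (S (α • x) + σsq))
        < (α • x) u / Real.log (1 + x u * g / (S x + σsq)) :=
          div_lt_div_of_pos_left (by simpa using mul_pos hαpos (hx u))
            (hlogpos x hx) hlt
      _ = α * (x u / Real.log (1 + x u * g / (S x + σsq))) := by
          rw [Pi.smul_apply, smul_eq_mul, mul_div_assoc]
  · -- infimum positivity
    have hne : ((fun p : Fin N → ℝ => p u / Real.log (1 + p u * g /
        (S p + σsq))) '' PosCone N).Nonempty :=
      ⟨_, ⟨(fun _ => 1), fun i => one_pos, rfl⟩⟩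
    have hlb : ∀ z ∈ (fun p : Fin N → ℝ => p u / Real.log (1 + p u * g /
        (S p + σsq))) '' PosCone N, σsq / g ≤ z := by
      rintro z ⟨p, hp, rfl⟩
      have hp' : ∀ i, 0 < p i := hp
      have hlog := hlogpos p hp'
      have hs := hspos p hp'
      have h1 : Real.log (1 + p u * g / (S p + σsq)) ≤ p u * g / σsq := by
        have hls : Real.log (1 + p u * g / (S p + σsq)) ≤
            p u * g / (S p + σsq) := by
          have := Real.log_le_sub_one_of_pos (x := 1 + p u * g / (S p + σsq))
            (by linarith)
          linarith
        have : p u * g / (S p + σsq) ≤ p u * g / σsq :=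
          div_le_div_of_nonneg_left (mul_pos (hp' u) hg).le hσ
            (by have := hSnn p hp'; linarith)
        linarith
      have h2 : p u / (p u * g / σsq) ≤
          p u / Real.log (1 + p u * g / (S p + σsq)) :=
        div_le_div_of_nonneg_left (hp' u).le hlog h1
      have h3 : p u / (p u * g / σsq) = σsq / g := by
        have hpu := (hp' u).ne'
        field_simp
      linarith [h2, h3.symm.le.trans h2]
    calc (0 : ℝ) < σsq / g := div_pos hσ hg
      _ ≤ _ := le_csInf hne hlb

/-- First part of Proposition 3: if `|h_u(ω)ᴴ v_u(ω)| ≠ 0` almost surely, then for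
almost every `ω` the function `p ↦ p_u / log(1 + s_u(p, ω))` is an MSP function. -/
theorem stmt9 {K N : ℕ} {Ω : Type*} [MeasurableSpace Ω]
    (P : Measure Ω) [IsProbabilityMeasure P]
    (σsq : ℝ) (hσ : 0 < σsq) (u : Fin N)
    (hch : Fin N → Ω → (Fin K → ℂ)) (v : Ω → (Fin K → ℂ))
    (hne : ∀ᵐ ω ∂P, chGain (hch u ω) (v ω) ≠ 0) :
    ∀ᵐ ω ∂P, IsMSPFun
      (fun p : Fin N → ℝ => p u / Real.log (1 + instSINR hch v σsq u p ω)) := by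
  filter_upwards [hne] with ω hω
  have hG : 0 < chGain (hch u ω) (v ω) :=
    lt_of_le_of_ne (norm_nonneg _) (Ne.symm hω)
  have := msp_aux u (chGain (hch u ω) (v ω) ^ 2) (pow_pos hG 2)
    (fun k => chGain (hch k ω) (v ω) ^ 2) (fun k => sq_nonneg _) hσ
  simpa [instSINR] using this
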